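/- arXiv:2008.08864 — 2 statements merged into one kernel-verified Lean document; each statement's English description precedes it below -/
import Mathlib

section
/- For every integer n ≥ 2, the number of bigrassmannian permutations in the symmetric group S_n equals the tetrahedral number (n−1)·n·(n+1)/6. -/
namespace Paper

/-- The simple transposition `s_i = (i, i+1)` (1-based) in `S_n`, realized as a
permutation of `Fin n`. For `i` outside `{1, …, n-1}` we set `s i = 1`. -/
def s (n i : ℕ) : Equiv.Perm (Fin n) :=
  if h : 1 ≤ i ∧ i < n then Equiv.swap ⟨i - 1, by omega⟩ ⟨i, by omega⟩ else 1

/-- The length of a permutation: its number of inversions. -/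
def len {n : ℕ} (w : Equiv.Perm (Fin n)) : ℕ :=
  (Finset.univ.filter (fun p : Fin n × Fin n => p.1 < p.2 ∧ w p.2 < w p.1)).card

/-- `i` is a left descent of `w` if `1 ≤ i ≤ n-1` and `ℓ(s_i w) < ℓ(w)`. -/
def IsLeftDescent {n : ℕ} (w : Equiv.Perm (Fin n)) (i : ℕ) : Prop :=
  1 ≤ i ∧ i ≤ n - 1 ∧ len (s n i * w) < len w

/-- `i` is a right descent of `w` if `1 ≤ i ≤ n-1` and `ℓ(w s_i) < ℓ(w)`. -/
def IsRightDescent {n : ℕ} (w : Equiv.Perm (Fin n)) (i : ℕ) : Prop :=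
  1 ≤ i ∧ i ≤ n - 1 ∧ len (w * s n i) < len w

/-- A permutation is bigrassmannian if it has exactly one left descent and
exactly one right descent. -/
def Bigrassmannian {n : ℕ} (w : Equiv.Perm (Fin n)) : Prop :=
  (∃! i, IsLeftDescent w i) ∧ (∃! j, IsRightDescent w j)

/-- One step of the Bruhat order: `w ⋖ t * w` for a transposition `t`
with `ℓ(w) < ℓ(t w)`. -/
def BruhatStep {n : ℕ} (w w' : Equiv.Perm (Fin n)) : Prop :=
  ∃ a b : Fin n, a ≠ b ∧ w' = Equiv.swap a b * w ∧ len w < len w'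

/-- The Bruhat order on `S_n`: the partial order generated by `w < tw` whenever
`t` is a transposition and `ℓ(w) < ℓ(tw)`. -/
def BruhatLE {n : ℕ} : Equiv.Perm (Fin n) → Equiv.Perm (Fin n) → Prop :=
  Relation.ReflTransGen BruhatStep

/-- Strict Bruhat order. -/
def BruhatLT {n : ℕ} (x y : Equiv.Perm (Fin n)) : Prop :=
  BruhatLE x y ∧ x ≠ y

/-- The product `s_a s_{a+1} ⋯ s_b` of consecutive simple transpositions. -/
def ascRun (n a b : ℕ) : Equiv.Perm (Fin n) :=
  ((List.range (b + 1 - a)).map (fun t => s n (a + t))).prod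

/-- For `i ≤ j`: `b(i,j,k) = (s_i ⋯ s_{j+k})(s_{i-1} ⋯ s_{j+k-1}) ⋯ (s_{i-k} ⋯ s_j)`. -/
def bAux (n i j k : ℕ) : Equiv.Perm (Fin n) :=
  ((List.range (k + 1)).map (fun m => ascRun n (i - m) (j + k - m))).prod

/-- The bigrassmannian permutation `b(i,j,k)`; for `j < i` it is `b(j,i,k)⁻¹`. -/
def b (n i j k : ℕ) : Equiv.Perm (Fin n) :=
  if i ≤ j then bAux n i j k else (bAux n j i k)⁻¹

/-- The value `w(i)` of a permutation `w ∈ S_n` at `i ∈ {1, …, n}`, 1-based. -/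
def act {n : ℕ} (w : Equiv.Perm (Fin n)) (i : ℕ) : ℕ :=
  if h : 1 ≤ i ∧ i ≤ n then ((w ⟨i - 1, by omega⟩ : Fin n) : ℕ) + 1 else i

/-- The essential set of a permutation `w ∈ S_n`. -/
def Ess {n : ℕ} (w : Equiv.Perm (Fin n)) : Set (ℕ × ℕ) :=
  {p | 1 ≤ p.1 ∧ p.1 ≤ n - 1 ∧ 1 ≤ p.2 ∧ p.2 ≤ n - 1 ∧
    p.1 < act w⁻¹ p.2 ∧ p.2 < act w p.1 ∧
    act w (p.1 + 1) ≤ p.2 ∧ act w⁻¹ (p.2 + 1) ≤ p.1}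

/-- The rank function `r_w(i,j) = |{k ≤ i : w(k) ≤ j}|` (1-based). -/
def rnk {n : ℕ} (w : Equiv.Perm (Fin n)) (i j : ℕ) : ℕ :=
  ((Finset.Icc 1 i).filter (fun k => act w k ≤ j)).card

/-- The co-rank function `t_w(i,j) = min{i,j} - r_w(i,j)`. -/
def cork {n : ℕ} (w : Equiv.Perm (Fin n)) (i j : ℕ) : ℕ :=
  min i j - rnk w i j

/-- The set of bigrassmannian permutations `y ≤ w` in Bruhat order. -/
def BSet {n : ℕ} (w : Equiv.Perm (Fin n)) : Set (Equiv.Perm (Fin n)) :=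
  {y | Bigrassmannian y ∧ BruhatLE y w}

/-- The set of Bruhat-maximal elements of `BSet w`. -/
def BM {n : ℕ} (w : Equiv.Perm (Fin n)) : Set (Equiv.Perm (Fin n)) :=
  {y ∈ BSet w | ∀ z ∈ BSet w, BruhatLE y z → z = y}


def invs {n : ℕ} (w : Equiv.Perm (Fin n)) : Finset (Fin n × Fin n) :=
  Finset.univ.filter (fun p : Fin n × Fin n => p.1 < p.2 ∧ w p.2 < w p.1)

lemma len_eq_invs {n : ℕ} (w : Equiv.Perm (Fin n)) : len w = (invs w).card := rfl

lemma mem_invs {n : ℕ} (w : Equiv.Perm (Fin n)) (p : Fin n × Fin n) :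
    p ∈ invs w ↔ p.1 < p.2 ∧ w p.2 < w p.1 := by
  simp [invs]

lemma swap_pair_lt {n : ℕ} {a b : Fin n} (hab : (a:ℕ)+1 = (b:ℕ)) {p q : Fin n}
    (hpq : p < q) (hne : ¬(p = a ∧ q = b)) :
    Equiv.swap a b p < Equiv.swap a b q := by
  have hab' : a ≠ b := by
    intro h; rw [h] at hab; omega
  rcases eq_or_ne p a with rfl | hpa
  · rcases eq_or_ne q b with rfl | hqb
    · exact absurd ⟨rfl, rfl⟩ hne
    · have hqa : q ≠ p := by intro h; subst h; exact lt_irrefl _ hpq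
      rw [Equiv.swap_apply_left, Equiv.swap_apply_of_ne_of_ne hqa hqb]
      rw [Fin.lt_def] at hpq ⊢
      omega
  · rcases eq_or_ne p b with rfl | hpb
    · have hqa : q ≠ a := by
        intro h; subst h; rw [Fin.lt_def] at hpq; omega
      have hqb : q ≠ p := by intro h; subst h; exact lt_irrefl _ hpq
      rw [Equiv.swap_apply_right, Equiv.swap_apply_of_ne_of_ne hqa hqb]
      rw [Fin.lt_def] at hpq ⊢
      omega
    · rw [Equiv.swap_apply_of_ne_of_ne hpa hpb]
      rcases eq_or_ne q a with rfl | hqa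
      · rw [Equiv.swap_apply_left, Fin.lt_def] at *
        rw [Fin.ne_iff_vne] at hpa hpb
        omega
      · rcases eq_or_ne q b with rfl | hqb
        · rw [Equiv.swap_apply_right, Fin.lt_def] at *
          rw [Fin.ne_iff_vne] at hpa hpb
          omega
        · rw [Equiv.swap_apply_of_ne_of_ne hqa hqb]
          exact hpq

lemma card_erase_invs {n : ℕ} (w : Equiv.Perm (Fin n)) {a b : Fin n}
    (hab : (a:ℕ)+1 = (b:ℕ)) :
    ((invs (w * Equiv.swap a b)).erase (a,b)).card = ((invs w).erase (a,b)).card := by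
  have hmem : ∀ (u : Equiv.Perm (Fin n)) (p : Fin n × Fin n),
      p ∈ (invs (u * Equiv.swap a b)).erase (a, b) →
      (Equiv.swap a b p.1, Equiv.swap a b p.2) ∈ (invs u).erase (a, b) := by
    intro u p hp
    rw [Finset.mem_erase, mem_invs] at hp
    obtain ⟨hne, h1, h2⟩ := hp
    have hne' : ¬(p.1 = a ∧ p.2 = b) := by
      rintro ⟨e1, e2⟩
      exact hne (by rw [← e1, ← e2])
    rw [Finset.mem_erase, mem_invs]
    refine ⟨?_, swap_pair_lt hab h1 hne', ?_⟩
    · intro h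
      have e1 : Equiv.swap a b p.1 = a := congrArg Prod.fst h
      have e2 : Equiv.swap a b p.2 = b := congrArg Prod.snd h
      have eb : p.1 = b := by
        have := congrArg (Equiv.swap a b) e1
        rwa [Equiv.swap_apply_self, Equiv.swap_apply_left] at this
      have ea : p.2 = a := by
        have := congrArg (Equiv.swap a b) e2
        rwa [Equiv.swap_apply_self, Equiv.swap_apply_right] at this
      rw [Fin.lt_def, eb, ea] at h1
      omega
    · exact h2
  apply Finset.card_bij'
    (fun p _ => (Equiv.swap a b p.1, Equiv.swap a b p.2))
    (fun p _ => (Equiv.swap a b p.1, Equiv.swap a b p.2))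
  · intro p hp
    exact hmem w p hp
  · intro p hp
    have := hmem (w * Equiv.swap a b) p ?_
    · simpa [mul_assoc] using this
    · rwa [mul_assoc, Equiv.swap_mul_self, mul_one]
  · intro p hp
    simp [Equiv.swap_apply_self]
  · intro p hp
    simp [Equiv.swap_apply_self]

lemma len_mul_swap_of_lt {n : ℕ} (w : Equiv.Perm (Fin n)) {a b : Fin n}
    (hab : (a:ℕ)+1 = (b:ℕ)) (h : w b < w a) :
    len (w * Equiv.swap a b) + 1 = len w := by
  have hab_lt : a < b := by rw [Fin.lt_def]; omega
  have hmem : (a, b) ∈ invs w := by rw [mem_invs]; exact ⟨hab_lt, h⟩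
  have hnmem : (a, b) ∉ invs (w * Equiv.swap a b) := by
    rw [mem_invs]
    rintro ⟨-, h2⟩
    simp only [Equiv.Perm.mul_apply, Equiv.swap_apply_left, Equiv.swap_apply_right] at h2
    exact absurd h (not_lt.2 (le_of_lt h2))
  have e1 : ((invs w).erase (a,b)).card + 1 = (invs w).card :=
    Finset.card_erase_add_one hmem
  have e2 : (invs (w * Equiv.swap a b)).erase (a,b) = invs (w * Equiv.swap a b) :=
    Finset.erase_eq_of_notMem hnmem
  rw [len_eq_invs, len_eq_invs, ← e1, ← e2, card_erase_invs w hab]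

lemma len_mul_swap_of_gt {n : ℕ} (w : Equiv.Perm (Fin n)) {a b : Fin n}
    (hab : (a:ℕ)+1 = (b:ℕ)) (h : w a < w b) :
    len (w * Equiv.swap a b) = len w + 1 := by
  have := len_mul_swap_of_lt (w * Equiv.swap a b) hab (a := a) (b := b) ?_
  · rw [mul_assoc, Equiv.swap_mul_self, mul_one] at this
    omega
  · simp only [Equiv.Perm.mul_apply, Equiv.swap_apply_left, Equiv.swap_apply_right]
    exact h

lemma len_inv {n : ℕ} (w : Equiv.Perm (Fin n)) : len w⁻¹ = len w := by
  rw [len_eq_invs, len_eq_invs]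
  apply Finset.card_bij' (fun p _ => (w⁻¹ p.2, w⁻¹ p.1)) (fun p _ => (w p.2, w p.1))
  · intro p hp
    rw [mem_invs] at hp ⊢
    refine ⟨hp.2, ?_⟩
    simp only [← Equiv.Perm.mul_apply, mul_inv_cancel, Equiv.Perm.one_apply]
    exact hp.1
  · intro p hp
    rw [mem_invs] at hp ⊢
    refine ⟨hp.2, ?_⟩
    simp only [← Equiv.Perm.mul_apply, inv_mul_cancel, Equiv.Perm.one_apply]
    exact hp.1
  · intro p hp; simp
  · intro p hp; simp

def tf {n : ℕ} (w : Equiv.Perm (Fin n)) (k : ℕ) : ℕ :=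
  if h : k < n then (w ⟨k, h⟩ : ℕ) else k

def DD (n : ℕ) (f : ℕ → ℕ) (i : ℕ) : Prop := 1 ≤ i ∧ i < n ∧ f i < f (i-1)

lemma sn_inv {n i : ℕ} : (s n i)⁻¹ = s n i := by
  unfold s
  split_ifs
  · exact Equiv.swap_inv _ _
  · rfl

lemma isRightDescent_iff {n : ℕ} (w : Equiv.Perm (Fin n)) (i : ℕ) :
    IsRightDescent w i ↔ DD n (tf w) i := by
  unfold IsRightDescent DD
  by_cases h : 1 ≤ i ∧ i < n
  · obtain ⟨h1, h2⟩ := h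
    have hs : s n i = Equiv.swap ⟨i - 1, by omega⟩ ⟨i, h2⟩ := dif_pos ⟨h1, h2⟩
    have hab : ((⟨i - 1, by omega⟩ : Fin n) : ℕ) + 1 = ((⟨i, h2⟩ : Fin n) : ℕ) := by
      simp; omega
    have htf1 : tf w i = (w ⟨i, h2⟩ : ℕ) := dif_pos h2
    have htf2 : tf w (i-1) = (w ⟨i-1, by omega⟩ : ℕ) := dif_pos (by omega)
    rw [hs, htf1, htf2]
    constructor
    · rintro ⟨-, -, hlen⟩
      by_contra hc
      push_neg at hc
      have hle := hc h1 h2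
      have hne : ((w ⟨i, h2⟩ : Fin n) : ℕ) ≠ ((w ⟨i-1, by omega⟩ : Fin n) : ℕ) := by
        intro he
        have := w.injective (Fin.ext he)
        rw [Fin.mk.injEq] at this
        omega
      have hgt : w ⟨i-1, by omega⟩ < w ⟨i, h2⟩ := by
        rw [Fin.lt_def]
        omega
      have := len_mul_swap_of_gt w hab hgt
      omega
    · rintro ⟨-, -, hlt⟩
      refine ⟨h1, by omega, ?_⟩
      have hlt' : w ⟨i, h2⟩ < w ⟨i-1, by omega⟩ := hlt
      have := len_mul_swap_of_lt w hab hlt'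
      omega
  · constructor
    · rintro ⟨h1, h2, -⟩
      exact absurd ⟨h1, by omega⟩ h
    · rintro ⟨h1, h2, -⟩
      exact absurd ⟨h1, h2⟩ h

lemma isLeftDescent_iff {n : ℕ} (w : Equiv.Perm (Fin n)) (i : ℕ) :
    IsLeftDescent w i ↔ DD n (tf w⁻¹) i := by
  rw [← isRightDescent_iff]
  unfold IsLeftDescent IsRightDescent
  have : len (s n i * w) = len (w⁻¹ * s n i) := by
    rw [← len_inv (s n i * w), mul_inv_rev, sn_inv]
  rw [this, len_inv]

lemma bigrassmannian_iff {n : ℕ} (w : Equiv.Perm (Fin n)) :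
    Bigrassmannian w ↔ (∃! i, DD n (tf w⁻¹) i) ∧ (∃! i, DD n (tf w) i) := by
  unfold Bigrassmannian
  simp only [isRightDescent_iff, isLeftDescent_iff]

def gg (a b c k : ℕ) : ℕ :=
  if k < a then k else if k < b then k + (c - b) else if k < c then k - (b - a) else k

structure Ctx (n : ℕ) (f g : ℕ → ℕ) (i j : ℕ) : Prop where
  hfn : ∀ k, k < n → f k < n
  hgn : ∀ k, k < n → g k < n
  hgf : ∀ k, k < n → g (f k) = k
  hfg : ∀ k, k < n → f (g k) = k
  hi1 : 1 ≤ i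
  hi2 : i < n
  hj1 : 1 ≤ j
  hj2 : j < n
  hfmono : ∀ k, 1 ≤ k → k < n → k ≠ i → f (k-1) < f k
  hfdesc : f i < f (i-1)
  hgmono : ∀ k, 1 ≤ k → k < n → k ≠ j → g (k-1) < g k
  hgdesc : g j < g (j-1)

namespace Ctx

variable {n : ℕ} {f g : ℕ → ℕ} {i j : ℕ}

def symm (c : Ctx n f g i j) : Ctx n g f j i :=
  ⟨c.hgn, c.hfn, c.hfg, c.hgf, c.hj1, c.hj2, c.hi1, c.hi2, c.hgmono, c.hgdesc,
   c.hfmono, c.hfdesc⟩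

lemma mono (c : Ctx n f g i j) : ∀ k l, k ≤ l → l < n → (l < i ∨ i ≤ k) →
    f k + (l - k) ≤ f l := by
  intro k l
  induction l with
  | zero =>
    intro hkl _ _
    have : k = 0 := by omega
    subst this; simp
  | succ m ih =>
    intro hkl hln hcond
    rcases eq_or_lt_of_le hkl with rfl | hlt
    · simp
    · have hc' : m < i ∨ i ≤ k := by
        rcases hcond with h | h
        · exact Or.inl (by omega)
        · exact Or.inr h
      have h1 := ih (by omega) (by omega) hc'
      have hne : m + 1 ≠ i := by rcases hcond with h | h <;> omega
      have h2 := c.hfmono (m+1) (by omega) hln hne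
      simp only [Nat.add_sub_cancel] at h2
      omega

lemma lb1 (c : Ctx n f g i j) (k : ℕ) (hk : k < i) : k ≤ f k := by
  have := c.mono 0 k (Nat.zero_le _) (by have := c.hi2; omega) (Or.inl hk)
  omega

lemma ub2 (c : Ctx n f g i j) (k : ℕ) (h1 : i ≤ k) (h2 : k < n) : f k ≤ k := by
  have := c.mono k (n-1) (by omega) (by omega) (Or.inr h1)
  have := c.hfn (n-1) (by omega)
  omega

lemma fi_lt (c : Ctx n f g i j) : f i < i := by
  have hI1 := c.hi1
  have hI2 := c.hi2
  have hJ1 := c.hj1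
  have hJ2 := c.hj2
  have h2 := c.ub2 i le_rfl c.hi2
  rcases lt_or_eq_of_le h2 with h | h
  · exact h
  exfalso
  have hi1 := c.hi1
  have hmn : f (i-1) < n := c.hfn _ (by omega)
  have hdesc := c.hfdesc
  have h3 := c.mono i (f (i-1)) (by omega) hmn (Or.inr le_rfl)
  have h4 := c.ub2 (f (i-1)) (by omega) hmn
  have h6 := c.hgf (f (i-1)) hmn
  have h7 := c.hgf (i-1) (by omega)
  have h5 : f (f (i-1)) = f (i-1) := by omega
  rw [h5, h7] at h6
  omega

lemma lt_fi1 (c : Ctx n f g i j) : i ≤ f (i-1) := by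
  have hI1 := c.hi1
  have hI2 := c.hi2
  have hJ1 := c.hj1
  have hJ2 := c.hj2
  have hi1 := c.hi1
  have h0 := c.lb1 (i-1) (by omega)
  rcases lt_or_eq_of_le h0 with h | h
  · omega
  exfalso
  have hdesc := c.hfdesc
  have hfi_n : f i < n := c.hfn i c.hi2
  have h1 := c.lb1 (f i) (by omega)
  have h2 := c.mono (f i) (i-1) (by omega) (by omega) (Or.inl (by omega))
  have h5 : f (f i) = f i := by omega
  have h6 := c.hgf (f i) hfi_n
  have h7 := c.hgf i c.hi2
  rw [h5, h7] at h6
  omega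

lemma B3low (c : Ctx n f g i j) : ∀ m, m < f i → g m < i := by
  have hI1 := c.hi1
  have hI2 := c.hi2
  have hJ1 := c.hj1
  have hJ2 := c.hj2
  intro m hm
  have hmn : m < n := lt_trans hm (c.hfn i c.hi2)
  by_contra hc
  push_neg at hc
  have hgmn := c.hgn m hmn
  have h1 := c.mono i (g m) hc hgmn (Or.inr le_rfl)
  rw [c.hfg m hmn] at h1
  omega

lemma B3high (c : Ctx n f g i j) : ∀ m, f (i-1) < m → m < n → i ≤ g m := by
  have hI1 := c.hi1
  have hI2 := c.hi2
  have hJ1 := c.hj1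
  have hJ2 := c.hj2
  intro m h1 h2
  by_contra hc
  push_neg at hc
  have hi1 := c.hi1
  have h3 := c.mono (g m) (i-1) (by omega) (by omega) (Or.inl (by omega))
  rw [c.hfg m h2] at h3
  omega

lemma fi_lt_j (c : Ctx n f g i j) : f i < j := by
  have hI1 := c.hi1
  have hI2 := c.hi2
  have hJ1 := c.hj1
  have hJ2 := c.hj2
  have hj1 := c.hj1
  have hd := c.hgdesc
  by_contra hc
  push_neg at hc
  rcases eq_or_lt_of_le hc with he | hlt
  · have hgj : g j = i := by rw [he, c.hgf i c.hi2]
    have := c.B3low (j-1) (by omega)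
    omega
  · have h1 := c.B3low j hlt
    have h2 := c.B3low (j-1) (by omega)
    have hgj1n : g (j-1) < n := c.hgn (j-1) (by have := c.hj2; omega)
    have h3 := c.mono (g j) (g (j-1)) (by omega) hgj1n (Or.inl h2)
    rw [c.hfg j c.hj2, c.hfg (j-1) (by have := c.hj2; omega)] at h3
    omega

lemma j_le_fi1 (c : Ctx n f g i j) : j ≤ f (i-1) := by
  have hI1 := c.hi1
  have hI2 := c.hi2
  have hJ1 := c.hj1
  have hJ2 := c.hj2
  have hj1 := c.hj1
  have hj2 := c.hj2
  have hd := c.hgdesc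
  by_contra hc
  push_neg at hc
  rcases eq_or_lt_of_le (Nat.succ_le_of_lt hc) with he | hlt
  · -- f (i-1) = j - 1
    have he' : j - 1 = f (i-1) := by omega
    have hgj1 : g (j-1) = i - 1 := by rw [he']; exact c.hgf (i-1) (by omega)
    have := c.B3high j (by omega) hj2
    have := c.hi1
    omega
  · -- f (i-1) < j - 1
    have h1 := c.B3high j (by omega) hj2
    have h2 := c.B3high (j-1) (by omega) (by omega)
    have hgjn : g j < n := c.hgn j hj2
    have h3 := c.mono (g j) (g (j-1)) (by omega) (c.hgn (j-1) (by omega)) (Or.inr h1)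
    rw [c.hfg j hj2, c.hfg (j-1) (by omega)] at h3
    omega

lemma B1 (c : Ctx n f g i j) : ∀ m, f i ≤ m → m < j → i ≤ g m := by
  have hI1 := c.hi1
  have hI2 := c.hi2
  have hJ1 := c.hj1
  have hJ2 := c.hj2
  have aux : ∀ d, f i + d < j → i ≤ g (f i + d) := by
    intro d
    induction d with
    | zero =>
      intro _
      rw [Nat.add_zero, c.hgf i c.hi2]
    | succ d ih =>
      intro hd
      have ih' := ih (by omega)
      by_contra hcon
      push_neg at hcon
      have hlt_n : f i + d + 1 < n := by have := c.hj2; omega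
      have := c.hgmono (f i + d + 1) (by omega) hlt_n (by omega)
      simp only [Nat.add_sub_cancel] at this
      have ee : f i + (d+1) = f i + d + 1 := by omega
      rw [ee] at hcon
      omega
  intro m h1 h2
  have e : f i + (m - f i) = m := by omega
  have := aux (m - f i) (by omega)
  rwa [e] at this

lemma B2 (c : Ctx n f g i j) : ∀ m, j ≤ m → m ≤ f (i-1) → g m < i := by
  have hI1 := c.hi1
  have hI2 := c.hi2
  have hJ1 := c.hj1
  have hJ2 := c.hj2
  have hfin : f (i-1) < n := c.hfn (i-1) (by have := c.hi2; omega)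
  have aux : ∀ d, j ≤ f (i-1) - d → g (f (i-1) - d) < i := by
    intro d
    induction d with
    | zero =>
      intro _
      have : g (f (i-1)) = i - 1 := c.hgf (i-1) (by have := c.hi2; omega)
      rw [Nat.sub_zero, this]
      have := c.hi1; omega
    | succ d ih =>
      intro hd
      have hj1 := c.hj1
      have ih' := ih (by omega)
      by_contra hcon
      push_neg at hcon
      have he : f (i-1) - (d+1) + 1 = f (i-1) - d := by omega
      have := c.hgmono (f (i-1) - d) (by omega) (by omega) (by omega)
      rw [← he] at this
      simp only [Nat.add_sub_cancel] at this
      rw [he] at this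
      omega
  intro m h1 h2
  have e : f (i-1) - (f (i-1) - m) = m := by omega
  have := aux (f (i-1) - m) (by omega)
  rwa [e] at this

lemma gj_le (c : Ctx n f g i j) : g j ≤ f i := by
  have hI1 := c.hi1
  have hI2 := c.hi2
  have hJ1 := c.hj1
  have hJ2 := c.hj2
  rcases Nat.eq_zero_or_pos (g j) with h0 | h0
  · omega
  have hgji : g j < i := c.symm.fi_lt_j
  have hkn : g j - 1 < n := by have := c.hi2; omega
  have h1 := c.lb1 (g j - 1) (by omega)
  have h2 := c.symm.B3low (g j - 1) (by omega)
  have h3 : f (g j - 1) < f i := by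
    by_contra hc
    push_neg at hc
    have := c.B1 (f (g j - 1)) hc h2
    rw [c.hgf (g j - 1) hkn] at this
    omega
  omega

lemma gj_eq (c : Ctx n f g i j) : g j = f i := le_antisymm c.gj_le c.symm.gj_le

lemma le_gj1 (c : Ctx n f g i j) : f (i-1) ≤ g (j-1) := by
  have hI1 := c.hi1
  have hI2 := c.hi2
  have hJ1 := c.hj1
  have hJ2 := c.hj2
  rcases lt_or_ge (g (j-1) + 1) n with hmn | hmn
  · have h1 := c.symm.B3high (g (j-1) + 1) (by omega) hmn
    have h2 := c.symm.j_le_fi1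
    have h3 : f (i-1) < f (g (j-1) + 1) := by
      by_contra hc
      push_neg at hc
      have := c.B2 (f (g (j-1)+1)) h1 hc
      rw [c.hgf _ hmn] at this
      omega
    have h4 := c.ub2 (g (j-1)+1) (by omega) hmn
    omega
  · have := c.hfn (i-1) (by have := c.hi2; omega)
    omega

lemma gj1_eq (c : Ctx n f g i j) : g (j-1) = f (i-1) :=
  le_antisymm c.symm.le_gj1 c.le_gj1

lemma key (c : Ctx n f g i j) : f i + (f (i-1) + 1) = i + j := by
  have hI1 := c.hi1
  have hI2 := c.hi2
  have hJ1 := c.hj1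
  have hJ2 := c.hj2
  have hac := c.fi_lt
  have hic := c.lt_fi1
  have hfin : f (i-1) < n := c.hfn (i-1) (by have := c.hi2; omega)
  have hgj1 := c.gj1_eq
  have hgj := c.gj_eq
  -- upper: f (f (i-1)) < j
  have e1 : f (f (i-1)) < j := c.symm.B2 (f (i-1)) hic (le_of_eq hgj1.symm)
  have e1m := c.mono i (f (i-1)) hic hfin (Or.inr le_rfl)
  -- lower: j ≤ f (f i)
  have e2 : j ≤ f (f i) := c.symm.B1 (f i) (le_of_eq hgj) hac
  have e2m := c.mono (f i) (i-1) (by omega) (by have := c.hi2; omega) (Or.inl (by omega))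
  have := c.hi1
  omega

lemma main (c : Ctx n f g i j) :
    ∀ k, k < n → f k = gg (f i) i (f (i-1) + 1) k := by
  have hac := c.fi_lt
  have hic := c.lt_fi1
  have hkey := c.key
  have hgj := c.gj_eq
  have hgj1 := c.gj1_eq
  have hi1 := c.hi1
  have hi2 := c.hi2
  have hfin : f (i-1) < n := c.hfn (i-1) (by omega)
  -- S1 aux : values below f i
  have hSa : ∀ m, m < f i → f m < f i := by
    intro m hm
    have hmn : m < n := by omega
    have h2 := c.symm.B3low m (by omega)
    by_contra hc
    push_neg at hc
    have := c.B1 (f m) hc h2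
    rw [c.hgf m hmn] at this
    omega
  -- S2 aux : values above f (i-1)
  have hSc : ∀ m, f (i-1) < m → m < n → f (i-1) < f m := by
    intro m h1 h2
    have h3 := c.symm.B3high m (by omega) h2
    by_contra hc
    push_neg at hc
    have := c.B2 (f m) h3 hc
    rw [c.hgf m h2] at this
    omega
  intro k hk
  unfold gg
  split_ifs with h1 h2 h3
  · -- k < f i
    have h4 := c.lb1 k (by omega)
    have h5 := hSa k h1
    rcases eq_or_lt_of_le h4 with he | hlt
    · omega
    · exfalso
      have h6 := hSa (f i - 1) (by omega)
      have h7 := c.mono k (f i - 1) (by omega) (by omega) (Or.inl (by omega))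
      omega
  · -- f i ≤ k < i
    have hlow : j ≤ f (f i) := c.symm.B1 (f i) (le_of_eq hgj) hac
    have hm1 := c.mono (f i) k (by omega) (by omega) (Or.inl h2)
    have hm2 := c.mono k (i-1) (by omega) (by omega) (Or.inl (by omega))
    omega
  · -- i ≤ k < f (i-1) + 1
    have hm1 := c.mono i k (by omega) (by omega) (Or.inr le_rfl)
    have hm2 := c.mono k (f (i-1)) (by omega) hfin (Or.inr (by omega))
    have hup : f (f (i-1)) < j := c.symm.B2 (f (i-1)) hic (le_of_eq hgj1.symm)
    omega
  · -- f (i-1) + 1 ≤ k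
    have h4 := c.ub2 k (by omega) hk
    have h5 := hSc k (by omega) hk
    rcases eq_or_lt_of_le h4 with he | hlt
    · omega
    · exfalso
      have h6 := hSc (f (i-1) + 1) (by omega) (by omega)
      have h7 := c.mono (f (i-1) + 1) k (by omega) hk (Or.inr (by omega))
      omega

end Ctx
lemma gg_lt {n a b c : ℕ} (hbc : b ≤ c) (hcn : c ≤ n) {k : ℕ} (hk : k < n) :
    gg a b c k < n := by
  unfold gg; split_ifs <;> omega

lemma gg_gg {a b c : ℕ} (hab : a ≤ b) (hbc : b ≤ c) (k : ℕ) :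
    gg a (a + (c - b)) c (gg a b c k) = k := by
  unfold gg; split_ifs <;> omega

def FF (n a b c : ℕ) : Equiv.Perm (Fin n) :=
  if h : a < b ∧ b < c ∧ c ≤ n then
    { toFun := fun k => ⟨gg a b c k, gg_lt (by omega) h.2.2 k.2⟩
      invFun := fun k => ⟨gg a (a + (c - b)) c k, gg_lt (by omega) h.2.2 k.2⟩
      left_inv := fun k => by
        ext; exact gg_gg (by omega) (by omega) k
      right_inv := fun k => by
        ext
        have h2 : a + (c - (a + (c - b))) = b := by omega
        have := gg_gg (a := a) (b := a + (c - b)) (c := c) (by omega) (by omega) k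
        rwa [h2] at this }
  else 1

lemma tf_FF {n a b c : ℕ} (h : a < b ∧ b < c ∧ c ≤ n) {k : ℕ} (hk : k < n) :
    tf (FF n a b c) k = gg a b c k := by
  unfold tf FF
  rw [dif_pos hk, dif_pos h]
  rfl

lemma tf_FF_inv {n a b c : ℕ} (h : a < b ∧ b < c ∧ c ≤ n) {k : ℕ} (hk : k < n) :
    tf (FF n a b c)⁻¹ k = gg a (a + (c - b)) c k := by
  unfold tf FF
  rw [dif_pos hk, dif_pos h]
  rfl
lemma val_eq_tf {n : ℕ} (w : Equiv.Perm (Fin n)) (x : Fin n) : (w x : ℕ) = tf w x := by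
  unfold tf
  rw [dif_pos x.2]

lemma ctx_of_big {n : ℕ} {w : Equiv.Perm (Fin n)} {i j : ℕ}
    (hi : DD n (tf w) i) (hiu : ∀ m, DD n (tf w) m → m = i)
    (hj : DD n (tf w⁻¹) j) (hju : ∀ m, DD n (tf w⁻¹) m → m = j) :
    Ctx n (tf w) (tf w⁻¹) i j := by
  have hfn : ∀ (u : Equiv.Perm (Fin n)) k, k < n → tf u k < n := by
    intro u k hk
    unfold tf
    rw [dif_pos hk]
    exact (u ⟨k, hk⟩).2
  have hgf : ∀ (u : Equiv.Perm (Fin n)) k, k < n → tf u⁻¹ (tf u k) = k := by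
    intro u k hk
    unfold tf
    rw [dif_pos hk, dif_pos (u ⟨k, hk⟩).2]
    simp
  have hne : ∀ (u : Equiv.Perm (Fin n)) k, 1 ≤ k → k < n → tf u (k-1) ≠ tf u k := by
    intro u k h1 h2 he
    unfold tf at he
    rw [dif_pos (by omega : k - 1 < n), dif_pos h2] at he
    have := u.injective (Fin.ext he)
    rw [Fin.mk.injEq] at this
    omega
  have hmono : ∀ (u : Equiv.Perm (Fin n)) (i' : ℕ), (∀ m, DD n (tf u) m → m = i') →
      ∀ k, 1 ≤ k → k < n → k ≠ i' → tf u (k-1) < tf u k := by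
    intro u i' hu k h1 h2 h3
    have hnd : ¬ DD n (tf u) k := fun hD => h3 (hu k hD)
    unfold DD at hnd
    push_neg at hnd
    have := hnd h1 h2
    have := hne u k h1 h2
    omega
  obtain ⟨hi1, hi2, hid⟩ := hi
  obtain ⟨hj1, hj2, hjd⟩ := hj
  have hgf' : ∀ k, k < n → tf w (tf w⁻¹ k) = k := by
    intro k hk
    have := hgf w⁻¹ k hk
    rwa [inv_inv] at this
  exact ⟨hfn w, hfn w⁻¹, hgf w, hgf', hi1, hi2, hj1, hj2,
    hmono w i hiu, hid, hmono w⁻¹ j hju, hjd⟩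

lemma DD_gg {n a b c : ℕ} (h : a < b ∧ b < c ∧ c ≤ n) (f : ℕ → ℕ)
    (hf : ∀ k, k < n → f k = gg a b c k) : ∀ m, DD n f m ↔ m = b := by
  obtain ⟨h1, h2, h3⟩ := h
  intro m
  constructor
  · rintro ⟨hm1, hm2, hm3⟩
    rw [hf m hm2, hf (m-1) (by omega)] at hm3
    revert hm3
    unfold gg
    split_ifs <;> omega
  · intro hm
    rw [hm]
    refine ⟨by omega, by omega, ?_⟩
    rw [hf b (by omega), hf (b-1) (by omega)]
    unfold gg
    split_ifs <;> omega

lemma big_FF {n a b c : ℕ} (h : a < b ∧ b < c ∧ c ≤ n) :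
    Bigrassmannian (FF n a b c) := by
  rw [bigrassmannian_iff]
  have h' : a < a + (c - b) ∧ a + (c - b) < c ∧ c ≤ n := by omega
  constructor
  · have hdd := DD_gg h' (tf (FF n a b c)⁻¹) (fun k hk => tf_FF_inv h hk)
    exact ⟨a + (c - b), (hdd _).2 rfl, fun y hy => (hdd y).1 hy⟩
  · have hdd := DD_gg h (tf (FF n a b c)) (fun k hk => tf_FF h hk)
    exact ⟨b, (hdd _).2 rfl, fun y hy => (hdd y).1 hy⟩

lemma FF_classify {n : ℕ} {w : Equiv.Perm (Fin n)} (hw : Bigrassmannian w) :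
    ∃ a b c, (a < b ∧ b < c ∧ c ≤ n) ∧ w = FF n a b c := by
  rw [bigrassmannian_iff] at hw
  obtain ⟨⟨j, hj, hju⟩, ⟨i, hi, hiu⟩⟩ := hw
  have c := ctx_of_big hi hiu hj hju
  have hfin : tf w (i-1) < n := c.hfn (i-1) (by have := c.hi2; omega)
  have hcond : tf w i < i ∧ i < tf w (i-1) + 1 ∧ tf w (i-1) + 1 ≤ n :=
    ⟨c.fi_lt, by have := c.lt_fi1; omega, by omega⟩
  refine ⟨tf w i, i, tf w (i-1) + 1, hcond, ?_⟩
  apply Equiv.ext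
  intro x
  apply Fin.ext
  calc (w x : ℕ) = tf w x := val_eq_tf w x
    _ = gg (tf w i) i (tf w (i-1) + 1) x := c.main x x.2
    _ = tf (FF n (tf w i) i (tf w (i-1) + 1)) x := (tf_FF hcond x.2).symm
    _ = ((FF n (tf w i) i (tf w (i-1) + 1)) x : ℕ) := (val_eq_tf _ x).symm

lemma trip_eq {x y z a b c : ℕ} (h1 : x < y) (h2 : y < z) (h3 : a < b) (h4 : b < c)
    (h : ({x, y, z} : Finset ℕ) = {a, b, c}) : x = a ∧ y = b ∧ z = c := by
  have m1 : x ∈ ({a, b, c} : Finset ℕ) := by rw [← h]; simp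
  have m2 : y ∈ ({a, b, c} : Finset ℕ) := by rw [← h]; simp
  have m3 : z ∈ ({a, b, c} : Finset ℕ) := by rw [← h]; simp
  have m4 : a ∈ ({x, y, z} : Finset ℕ) := by rw [h]; simp
  have m5 : b ∈ ({x, y, z} : Finset ℕ) := by rw [h]; simp
  have m6 : c ∈ ({x, y, z} : Finset ℕ) := by rw [h]; simp
  simp only [Finset.mem_insert, Finset.mem_singleton] at m1 m2 m3 m4 m5 m6
  omega

lemma sorted_of_card_three {S : Finset ℕ} (h : S.card = 3) :
    ∃ x y z, x < y ∧ y < z ∧ S = {x, y, z} := by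
  obtain ⟨x, y, z, hxy, hxz, hyz, rfl⟩ := Finset.card_eq_three.1 h
  rcases lt_or_gt_of_ne hxy with h1 | h1 <;>
    rcases lt_or_gt_of_ne hxz with h2 | h2 <;>
    rcases lt_or_gt_of_ne hyz with h3 | h3
  · exact ⟨x, y, z, h1, h3, rfl⟩
  · exact ⟨x, z, y, h2, h3, by ext w; simp; tauto⟩
  · exfalso; omega
  · exact ⟨z, x, y, h2, h1, by ext w; simp; tauto⟩
  · exact ⟨y, x, z, h1, h2, by ext w; simp; tauto⟩
  · exfalso; omega
  · exact ⟨y, z, x, h3, h2, by ext w; simp; tauto⟩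
  · exact ⟨z, y, x, h3, h1, by ext w; simp; tauto⟩

theorem stmt0 (n : ℕ) (hn : 2 ≤ n) :
    Nat.card {w : Equiv.Perm (Fin n) // Bigrassmannian w} =
      (n - 1) * n * (n + 1) / 6 := by
  classical
  rw [Nat.card_eq_fintype_card, Fintype.card_subtype]
  have e1 : (Finset.univ.filter (fun w : Equiv.Perm (Fin n) => Bigrassmannian w)).card =
      (((Finset.range (n+1)) ×ˢ (Finset.range (n+1)) ×ˢ (Finset.range (n+1))).filter
        (fun t => t.1 < t.2.1 ∧ t.2.1 < t.2.2)).card := by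
    symm
    apply Finset.card_bij (fun t _ => FF n t.1 t.2.1 t.2.2)
    · intro t ht
      rw [Finset.mem_filter] at ht
      obtain ⟨hmem, h1, h2⟩ := ht
      simp only [Finset.mem_product, Finset.mem_range] at hmem
      rw [Finset.mem_filter]
      exact ⟨Finset.mem_univ _, big_FF ⟨h1, h2, by omega⟩⟩
    · intro t1 ht1 t2 ht2 heq
      rw [Finset.mem_filter] at ht1 ht2
      obtain ⟨hm1, h11, h12⟩ := ht1
      obtain ⟨hm2, h21, h22⟩ := ht2
      simp only [Finset.mem_product, Finset.mem_range] at hm1 hm2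
      have hc1 : t1.1 < t1.2.1 ∧ t1.2.1 < t1.2.2 ∧ t1.2.2 ≤ n := ⟨h11, h12, by omega⟩
      have hc2 : t2.1 < t2.2.1 ∧ t2.2.1 < t2.2.2 ∧ t2.2.2 ≤ n := ⟨h21, h22, by omega⟩
      have hdd1 := DD_gg hc1 (tf (FF n t1.1 t1.2.1 t1.2.2)) (fun k hk => tf_FF hc1 hk)
      have hdd2 := DD_gg hc2 (tf (FF n t2.1 t2.2.1 t2.2.2)) (fun k hk => tf_FF hc2 hk)
      have hb : t1.2.1 = t2.2.1 := by
        have h := (hdd1 t1.2.1).2 rfl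
        rw [heq] at h
        exact (hdd2 _).1 h
      have hv : ∀ k, k < n → gg t1.1 t1.2.1 t1.2.2 k = gg t2.1 t2.2.1 t2.2.2 k := by
        intro k hk
        rw [← tf_FF hc1 hk, ← tf_FF hc2 hk, heq]
      have hbn : t1.2.1 < n := by omega
      have hv1 := hv t1.2.1 hbn
      have hv2 := hv (t1.2.1 - 1) (by omega)
      rw [← hb] at hv1 hv2
      have ga1 : gg t1.1 t1.2.1 t1.2.2 t1.2.1 = t1.1 := by
        unfold gg; split_ifs <;> omega
      have ga2 : gg t2.1 t1.2.1 t2.2.2 t1.2.1 = t2.1 := by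
        unfold gg; split_ifs <;> omega
      have gb1 : gg t1.1 t1.2.1 t1.2.2 (t1.2.1 - 1) = t1.2.2 - 1 := by
        unfold gg; split_ifs <;> omega
      have gb2 : gg t2.1 t1.2.1 t2.2.2 (t1.2.1 - 1) = t2.2.2 - 1 := by
        unfold gg; split_ifs <;> omega
      rw [ga1, ga2] at hv1
      rw [gb1, gb2] at hv2
      have : t1.2.2 = t2.2.2 := by omega
      exact Prod.ext hv1 (Prod.ext hb this)
    · intro w hw
      rw [Finset.mem_filter] at hw
      obtain ⟨a, b, cc, hcond, rfl⟩ := FF_classify hw.2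
      refine ⟨(a, b, cc), ?_, rfl⟩
      rw [Finset.mem_filter]
      constructor
      · simp only [Finset.mem_product, Finset.mem_range]
        omega
      · exact ⟨hcond.1, hcond.2.1⟩
  have e2 : (((Finset.range (n+1)) ×ˢ (Finset.range (n+1)) ×ˢ (Finset.range (n+1))).filter
        (fun t => t.1 < t.2.1 ∧ t.2.1 < t.2.2)).card =
      ((Finset.range (n+1)).powersetCard 3).card := by
    apply Finset.card_bij (fun t _ => ({t.1, t.2.1, t.2.2} : Finset ℕ))
    · intro t ht
      rw [Finset.mem_filter] at ht
      obtain ⟨hmem, h1, h2⟩ := ht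
      simp only [Finset.mem_product, Finset.mem_range] at hmem
      rw [Finset.mem_powersetCard]
      constructor
      · intro x hx
        simp only [Finset.mem_insert, Finset.mem_singleton] at hx
        rw [Finset.mem_range]
        omega
      · exact Finset.card_eq_three.2 ⟨t.1, t.2.1, t.2.2, by omega, by omega, by omega, rfl⟩
    · intro t1 ht1 t2 ht2 heq
      rw [Finset.mem_filter] at ht1 ht2
      obtain ⟨-, h11, h12⟩ := ht1
      obtain ⟨-, h21, h22⟩ := ht2
      obtain ⟨e1, e2, e3⟩ := trip_eq h11 h12 h21 h22 heq
      exact Prod.ext e1 (Prod.ext e2 e3)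
    · intro S hS
      rw [Finset.mem_powersetCard] at hS
      obtain ⟨x, y, z, hxy, hyz, rfl⟩ := sorted_of_card_three hS.2
      refine ⟨(x, y, z), ?_, rfl⟩
      rw [Finset.mem_filter]
      have mx := Finset.mem_range.1 (hS.1 (by simp : x ∈ ({x, y, z} : Finset ℕ)))
      have my := Finset.mem_range.1 (hS.1 (by simp : y ∈ ({x, y, z} : Finset ℕ)))
      have mz := Finset.mem_range.1 (hS.1 (by simp : z ∈ ({x, y, z} : Finset ℕ)))
      constructor
      · simp only [Finset.mem_product, Finset.mem_range]
        exact ⟨mx, my, mz⟩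
      · exact ⟨hxy, hyz⟩
  rw [e1, e2, Finset.card_powersetCard, Finset.card_range]
  rw [Nat.choose_eq_descFactorial_div_factorial]
  have hd : (n+1).descFactorial 3 = (n-1) * n * (n+1) := by
    have h1 : n + 1 - 2 = n - 1 := by omega
    have h2 : n + 1 - 1 = n := by omega
    simp only [Nat.descFactorial_succ, Nat.descFactorial_zero, h1, h2, Nat.sub_zero,
      mul_one]
    ring
  rw [hd]
  norm_num [Nat.factorial]


end Paper
end

section
/- For every integer n ≥ 2 and all i, j ∈ {1,…,n−1}, the number of bigrassmannian permutations in S_n whose unique left descent is i and whose unique right descent is j equals min{i, j, n−i, n−j}. -/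
namespace Paper

-- inversion set
def Inv {n : ℕ} (w : Equiv.Perm (Fin n)) : Finset (Fin n × Fin n) :=
  Finset.univ.filter (fun p : Fin n × Fin n => p.1 < p.2 ∧ w p.2 < w p.1)

lemma len_eq_card_Inv {n : ℕ} (w : Equiv.Perm (Fin n)) : len w = (Inv w).card := rfl

lemma mem_Inv {n : ℕ} (w : Equiv.Perm (Fin n)) (p : Fin n × Fin n) :
    p ∈ Inv w ↔ p.1 < p.2 ∧ w p.2 < w p.1 := by
  simp [Inv]

lemma swap_adj_lt {n : ℕ} (a b : Fin n) (hab : (a : ℕ) + 1 = (b : ℕ)) (x y : Fin n)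
    (hxy : x < y) (hne : ¬(x = a ∧ y = b)) : Equiv.swap a b x < Equiv.swap a b y := by
  have hab' : a ≠ b := by intro h; rw [h] at hab; omega
  rw [Fin.lt_def] at hxy ⊢
  rcases eq_or_ne x a with rfl | hxa
  · rcases eq_or_ne y b with rfl | hyb
    · exact absurd ⟨rfl, rfl⟩ hne
    · have hya : y ≠ x := by intro h; rw [h] at hxy; omega
      rw [Equiv.swap_apply_left, Equiv.swap_apply_of_ne_of_ne hya hyb]
      have : (y : ℕ) ≠ (b : ℕ) := fun h => hyb (Fin.ext h)
      omega
  · rcases eq_or_ne y b with rfl | hyb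
    · have hxb : x ≠ y := by intro h; rw [h] at hxy; omega
      rw [Equiv.swap_apply_right, Equiv.swap_apply_of_ne_of_ne hxa hxb]
      have : (x : ℕ) ≠ (a : ℕ) := fun h => hxa (Fin.ext h)
      omega
    · rcases eq_or_ne x b with rfl | hxb
      · have hya : y ≠ a := by
          intro h; rw [h] at hxy; omega
        rw [Equiv.swap_apply_right, Equiv.swap_apply_of_ne_of_ne hya hyb]
        omega
      · rcases eq_or_ne y a with rfl | hya
        · rw [Equiv.swap_apply_left, Equiv.swap_apply_of_ne_of_ne hxa hxb]
          have : (x : ℕ) ≠ (y : ℕ) := fun h => hxa (Fin.ext (by omega))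
          omega
        · rw [Equiv.swap_apply_of_ne_of_ne hxa hxb, Equiv.swap_apply_of_ne_of_ne hya hyb]
          exact hxy

lemma card_erase_Inv {n : ℕ} (w : Equiv.Perm (Fin n)) (a b : Fin n)
    (hab : (a : ℕ) + 1 = (b : ℕ)) :
    ((Inv (w * Equiv.swap a b)).erase (a, b)).card = ((Inv w).erase (a, b)).card := by
  have key : ∀ (u : Equiv.Perm (Fin n)) (p : Fin n × Fin n),
      p ∈ (Inv (u * Equiv.swap a b)).erase (a, b) →
      (Equiv.swap a b p.1, Equiv.swap a b p.2) ∈ (Inv u).erase (a, b) := by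
    intro u p hp
    rw [Finset.mem_erase, mem_Inv] at hp ⊢
    obtain ⟨hne, h1, h2⟩ := hp
    refine ⟨?_, ?_, ?_⟩
    · intro h
      have h1' : Equiv.swap a b p.1 = a := congrArg Prod.fst h
      have h2' : Equiv.swap a b p.2 = b := congrArg Prod.snd h
      have : p.1 = b := by
        have := congrArg (Equiv.swap a b) h1'
        rwa [Equiv.swap_apply_self, Equiv.swap_apply_left] at this
      have : p.2 = a := by
        have := congrArg (Equiv.swap a b) h2'
        rwa [Equiv.swap_apply_self, Equiv.swap_apply_right] at this
      rw [Fin.lt_def] at h1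
      omega
    · apply swap_adj_lt a b hab _ _ h1
      rintro ⟨rfl, rfl⟩
      exact hne rfl
    · simpa using h2
  apply Finset.card_bij (fun p _ => (Equiv.swap a b p.1, Equiv.swap a b p.2))
  · exact fun p hp => key w p hp
  · intro p hp q hq h
    have h1 := congrArg Prod.fst h
    have h2 := congrArg Prod.snd h
    simp only at h1 h2
    have := (Equiv.swap a b).injective h1
    have := (Equiv.swap a b).injective h2
    exact Prod.ext ‹p.1 = q.1› ‹p.2 = q.2›
  · intro q hq
    refine ⟨(Equiv.swap a b q.1, Equiv.swap a b q.2), ?_, ?_⟩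
    · have hq' : q ∈ (Inv ((w * Equiv.swap a b) * Equiv.swap a b)).erase (a, b) := by
        rwa [mul_assoc, Equiv.swap_mul_self, mul_one]
      exact key (w * Equiv.swap a b) q hq'
    · simp [Equiv.swap_apply_self]

lemma ab_mem_Inv_iff {n : ℕ} (w : Equiv.Perm (Fin n)) (a b : Fin n)
    (hab : (a : ℕ) + 1 = (b : ℕ)) :
    ((a, b) ∈ Inv w) ↔ w b < w a := by
  rw [mem_Inv]
  have : a < b := by rw [Fin.lt_def]; omega
  simp [this]

lemma len_mul_swap_lt_iff {n : ℕ} (w : Equiv.Perm (Fin n)) (a b : Fin n)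
    (hab : (a : ℕ) + 1 = (b : ℕ)) :
    len (w * Equiv.swap a b) < len w ↔ w b < w a := by
  have hcard := card_erase_Inv w a b hab
  have hab1 : (w * Equiv.swap a b) a = w b := by
    simp [Equiv.Perm.mul_apply]
  have hab2 : (w * Equiv.swap a b) b = w a := by
    simp [Equiv.Perm.mul_apply]
  have hmem1 := ab_mem_Inv_iff w a b hab
  have hmem2 := ab_mem_Inv_iff (w * Equiv.swap a b) a b hab
  rw [hab1, hab2] at hmem2
  have hne : w a ≠ w b := fun h => by
    have := w.injective h
    rw [this] at hab; omega
  rcases lt_or_gt_of_ne hne with h | h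
  · -- w a < w b : length goes up
    have m2 : (a, b) ∈ Inv (w * Equiv.swap a b) := hmem2.2 h
    have m1 : (a, b) ∉ Inv w := fun hm => absurd (hmem1.1 hm) (by omega)
    have e1 : (Inv (w * Equiv.swap a b)).card = ((Inv (w * Equiv.swap a b)).erase (a, b)).card + 1 :=
      (Finset.card_erase_add_one m2).symm
    have e2 : (Inv w).card = ((Inv w).erase (a, b)).card := by
      rw [Finset.erase_eq_of_notMem m1]
    rw [len_eq_card_Inv, len_eq_card_Inv, e1, e2, hcard]
    omega
  · have m1 : (a, b) ∈ Inv w := hmem1.2 h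
    have m2 : (a, b) ∉ Inv (w * Equiv.swap a b) := fun hm => absurd (hmem2.1 hm) (by omega)
    have e1 : (Inv w).card = ((Inv w).erase (a, b)).card + 1 :=
      (Finset.card_erase_add_one m1).symm
    have e2 : (Inv (w * Equiv.swap a b)).card = ((Inv (w * Equiv.swap a b)).erase (a, b)).card := by
      rw [Finset.erase_eq_of_notMem m2]
    rw [len_eq_card_Inv, len_eq_card_Inv, e1, e2, hcard]
    omega

lemma s_inv (n i : ℕ) : (s n i)⁻¹ = s n i := by
  unfold s
  split
  · exact Equiv.swap_inv _ _
  · exact inv_one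

lemma isLeftDescent_iff_inv {n : ℕ} (w : Equiv.Perm (Fin n)) (i : ℕ) :
    IsLeftDescent w i ↔ IsRightDescent w⁻¹ i := by
  unfold IsLeftDescent IsRightDescent
  have h1 : len (s n i * w) = len (w⁻¹ * s n i) := by
    have : (w⁻¹ * s n i)⁻¹ = s n i * w := by
      rw [mul_inv_rev, s_inv, inv_inv]
    rw [← this, len_inv]
  rw [h1, len_inv]

def fv {n : ℕ} (w : Equiv.Perm (Fin n)) (t : ℕ) : ℕ :=
  if h : t < n then (w ⟨t, h⟩ : ℕ) else t

lemma fv_lt {n : ℕ} (w : Equiv.Perm (Fin n)) (t : ℕ) (h : t < n) : fv w t < n := by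
  rw [fv, dif_pos h]; exact (w ⟨t, h⟩).isLt

lemma fv_id {n : ℕ} (w : Equiv.Perm (Fin n)) (t : ℕ) (h : n ≤ t) : fv w t = t := by
  rw [fv, dif_neg (by omega)]

lemma fv_inv_fv {n : ℕ} (w : Equiv.Perm (Fin n)) (t : ℕ) : fv w⁻¹ (fv w t) = t := by
  by_cases h : t < n
  · have e : fv w t = (w ⟨t, h⟩ : ℕ) := dif_pos h
    rw [e, fv, dif_pos (w ⟨t, h⟩).isLt]
    simp
  · rw [fv_id w t (by omega), fv_id w⁻¹ t (by omega)]

lemma isRightDescent_iff_s1 {n : ℕ} (w : Equiv.Perm (Fin n)) (k : ℕ)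
    (h1 : 1 ≤ k) (h2 : k ≤ n - 1) (hn : 2 ≤ n) :
    IsRightDescent w k ↔ fv w k < fv w (k - 1) := by
  have hk : k < n := by omega
  have hk1 : k - 1 < n := by omega
  have hs : s n k = Equiv.swap ⟨k - 1, hk1⟩ ⟨k, hk⟩ := by
    rw [s, dif_pos ⟨h1, hk⟩]
  have hub : ((⟨k - 1, hk1⟩ : Fin n) : ℕ) + 1 = ((⟨k, hk⟩ : Fin n) : ℕ) := by
    simp; omega
  constructor
  · rintro ⟨-, -, hlen⟩
    rw [hs] at hlen
    have := (len_mul_swap_lt_iff w _ _ hub).1 hlen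
    rw [Fin.lt_def] at this
    rw [fv, dif_pos hk, fv, dif_pos hk1]
    exact this
  · intro h
    refine ⟨h1, h2, ?_⟩
    rw [hs]
    apply (len_mul_swap_lt_iff w _ _ hub).2
    rw [Fin.lt_def]
    rw [fv, dif_pos hk, fv, dif_pos hk1] at h
    exact h


-- abstract doubly-grassmannian data
structure GD (n d e : ℕ) (f g : ℕ → ℕ) : Prop where
  hn : 2 ≤ n
  hd : d ≤ n - 2
  he : e ≤ n - 2
  hfn : ∀ t, t < n → f t < n
  hgf : ∀ t, g (f t) = t
  hfid : ∀ t, n ≤ t → f t = t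
  hmono : ∀ k, k + 1 ≤ n - 1 → k ≠ d → f k < f (k + 1)
  hdesc : f (d + 1) < f d

lemma run_mono (f : ℕ → ℕ) : ∀ a b : ℕ, a ≤ b →
    (∀ k, a ≤ k → k + 1 ≤ b → f k < f (k + 1)) → f a + (b - a) ≤ f b := by
  intro a b hab
  induction b, hab using Nat.le_induction with
  | base => intro _; simp
  | succ b hab ih =>
    intro h
    have h1 := ih (fun k hk hk' => h k hk (by omega))
    have h2 := h b hab (le_refl _)
    omega

namespace GD

variable {n d e : ℕ} {f g : ℕ → ℕ}

lemma runlow (h1 : GD n d e f g) {a b : ℕ} (hab : a ≤ b) (hb : b ≤ d) :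
    f a + (b - a) ≤ f b := by
  apply run_mono f a b hab
  intro k hk hk'
  exact h1.hmono k (by have := h1.hd; omega) (by omega)

lemma runhigh (h1 : GD n d e f g) {a b : ℕ} (ha : d + 1 ≤ a) (hab : a ≤ b) (hb : b ≤ n - 1) :
    f a + (b - a) ≤ f b := by
  apply run_mono f a b hab
  intro k hk hk'
  exact h1.hmono k (by omega) (by omega)

lemma ge_low (h1 : GD n d e f g) {t : ℕ} (ht : t ≤ d) : t ≤ f t := by
  have := h1.runlow (Nat.zero_le t) ht
  omega

lemma le_high (h1 : GD n d e f g) {t : ℕ} (ht : d + 1 ≤ t) (ht2 : t < n) : f t ≤ t := by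
  have h2 := h1.runhigh ht (show t ≤ n - 1 by omega) (le_refl _)
  have h3 := h1.hfn (n - 1) (by have := h1.hn; omega)
  omega

lemma fix_low (h1 : GD n d e f g) (h2 : GD n e d g f) {t : ℕ}
    (ht : t ≤ d) (hft : f t ≤ e) : f t = t := by
  have ha := h2.ge_low hft
  rw [h1.hgf] at ha
  have := h1.ge_low ht
  omega

lemma fix_high (h1 : GD n d e f g) (h2 : GD n e d g f) {t : ℕ}
    (ht : d + 1 ≤ t) (ht2 : t < n) (hft : e + 1 ≤ f t) : f t = t := by
  have ha := h2.le_high hft (h1.hfn t ht2)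
  rw [h1.hgf] at ha
  have := h1.le_high ht ht2
  omega

lemma d_lt_n (h1 : GD n d e f g) : d + 1 < n := by have := h1.hd; have := h1.hn; omega

-- f d is moved up past e
lemma fd_big (h1 : GD n d e f g) (h2 : GD n e d g f) : e + 1 ≤ f d ∧ d + 1 ≤ f d := by
  have hdn := h1.d_lt_n
  have hfd : f d ≠ d := by
    intro hfix
    -- then all of [0,d] fixed
    have hall : ∀ t, t ≤ d → f t = t := by
      intro t ht
      have hrun := h1.runlow ht (le_refl d)
      have := h1.ge_low ht
      omega
    have hlt : f (d + 1) < d := by have := h1.hdesc; omega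
    have := hall (f (d + 1)) (by omega)
    have := congrArg g this
    rw [h1.hgf, h1.hgf] at this
    omega
  have hge := h1.ge_low (le_refl d)
  by_cases he' : f d ≤ e
  · exact absurd (h1.fix_low h2 (le_refl d) he') hfd
  · constructor <;> omega

-- f (d+1) is moved down below both d and e
lemma fd1_small (h1 : GD n d e f g) (h2 : GD n e d g f) :
    f (d + 1) ≤ e ∧ f (d + 1) ≤ d := by
  have hdn := h1.d_lt_n
  have hne : f (d + 1) ≠ d + 1 := by
    intro hfix
    have hall : ∀ t, d + 1 ≤ t → f t = t := by
      intro t ht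
      by_cases htn : t < n
      · have hrun := h1.runhigh (le_refl (d+1)) ht (by omega)
        have := h1.le_high ht htn
        omega
      · exact h1.hfid t (by omega)
    have hbig : d + 1 < f d := by have := h1.hdesc; omega
    have := hall (f d) (by omega)
    have := congrArg g this
    rw [h1.hgf, h1.hgf] at this
    omega
  have hle := h1.le_high (le_refl (d+1)) (by omega)
  have hd' : f (d + 1) ≤ d := by omega
  refine ⟨?_, hd'⟩
  by_cases he' : e + 1 ≤ f (d + 1)
  · exact absurd (h1.fix_high h2 (le_refl (d+1)) (by omega) he') hne
  · omega

-- the down-block: f (d+1+m) = f (d+1) + m for m <= e - f(d+1), and bound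
lemma down_block (h1 : GD n d e f g) (h2 : GD n e d g f) :
    d + e + 2 ≤ n + f (d + 1) ∧ g e = d + 1 + (e - f (d + 1)) ∧
      (∀ m, m ≤ e - f (d + 1) → f (d + 1 + m) = f (d + 1) + m) := by
  have hdn := h1.d_lt_n
  have hen := h2.d_lt_n
  obtain ⟨hpe, hpd⟩ := h1.fd1_small h2
  obtain ⟨hge1, hge2⟩ := h2.fd_big h1
  -- hge1 : d + 1 ≤ g e, hge2 : e + 1 ≤ g e
  have hqn : g e < n := h2.hfn e (by omega)
  have hgp : g (f (d + 1)) = d + 1 := h1.hgf (d + 1)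
  -- g strictly increasing on [f (d+1), e]
  have hlow : g (f (d + 1)) + (e - f (d + 1)) ≤ g e := h2.runlow hpe (le_refl e)
  have hq1 : d + 1 + (e - f (d + 1)) ≤ g e := by omega
  -- f strictly increasing on [d+1, g e]
  have hfq : f (g e) = e := h2.hgf e
  have hhigh : f (d + 1) + (g e - (d + 1)) ≤ f (g e) := h1.runhigh (le_refl _) hge1 (by omega)
  have hqe : g e = d + 1 + (e - f (d + 1)) := by omega
  refine ⟨by omega, hqe, ?_⟩
  intro m hm
  have hup : f (d + 1) + m ≤ f (d + 1 + m) := by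
    have := h1.runhigh (le_refl (d + 1)) (show d + 1 ≤ d + 1 + m by omega)
      (show d + 1 + m ≤ n - 1 by omega)
    omega
  have hdown : f (d + 1 + m) + (g e - (d + 1 + m)) ≤ f (g e) :=
    h1.runhigh (show d + 1 ≤ d + 1 + m by omega) (by omega) (by omega)
  omega

end GD

-- the explicit block permutation on ℕ
def blockF (d e p t : ℕ) : ℕ :=
  if t < p then t
  else if t ≤ d then t + (e + 1 - p)
  else if t ≤ d + 1 + e - p then t - (d + 1 - p)
  else t

lemma blockF_lt {n d e p : ℕ} (hpd : p ≤ d) (hpe : p ≤ e) (hb : d + e + 2 ≤ n + p)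
    {t : ℕ} (ht : t < n) : blockF d e p t < n := by
  unfold blockF; split_ifs <;> omega

lemma blockF_inv {d e p : ℕ} (hpd : p ≤ d) (hpe : p ≤ e) (t : ℕ) :
    blockF e d p (blockF d e p t) = t := by
  unfold blockF; split_ifs <;> omega

-- key structure theorem
lemma GD.structure {n d e : ℕ} {f g : ℕ → ℕ} (h1 : GD n d e f g) (h2 : GD n e d g f) :
    ∃ p, p ≤ d ∧ p ≤ e ∧ d + e + 2 ≤ n + p ∧ ∀ t, f t = blockF d e p t := by
  have hdn := h1.d_lt_n
  have hen := h2.d_lt_n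
  obtain ⟨hpe, hpd⟩ := h1.fd1_small h2
  obtain ⟨hb, hge, hdown⟩ := h1.down_block h2
  obtain ⟨hb', hfd', hup'⟩ := h2.down_block h1
  -- up-block in terms of f : f (g (e+1) + m) = e + 1 + m for m ≤ d - g (e+1)
  have hup : ∀ m, m ≤ d - g (e + 1) → f (g (e + 1) + m) = e + 1 + m := by
    intro m hm
    have h3 := hup' m hm
    have h4 := congrArg f h3
    rw [h2.hgf] at h4
    omega
  obtain ⟨hq'e, hq'd⟩ := h2.fd1_small h1
  -- hq'e : g (e + 1) ≤ d, hq'd : g (e + 1) ≤ e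
  have hgp : g (f (d + 1)) = d + 1 := h1.hgf (d + 1)
  have hfp' : f (g (e + 1)) = e + 1 := h2.hgf (e + 1)
  -- p = p'
  have hpp' : f (d + 1) = g (e + 1) := by
    rcases lt_trichotomy (f (d + 1)) (g (e + 1)) with h | h | h
    · exfalso
      have hfp : e + 1 ≤ f (f (d + 1)) := by
        by_contra hc
        have hfix := h1.fix_low h2 (show f (d + 1) ≤ d by omega) (by omega)
        have := congrArg g hfix
        rw [h1.hgf] at this
        omega
      have hvn : f (f (d + 1)) < n := h1.hfn _ (by omega)
      have hrun : g (e + 1) + (f (f (d + 1)) - (e + 1)) ≤ g (f (f (d + 1))) :=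
        h2.runhigh (le_refl _) hfp (by omega)
      rw [h1.hgf] at hrun
      omega
    · exact h
    · exfalso
      have hgp2 : d + 1 ≤ g (g (e + 1)) := by
        by_contra hc
        have hfix := h2.fix_low h1 (show g (e + 1) ≤ e by omega) (by omega)
        have := congrArg f hfix
        rw [h2.hgf] at this
        omega
      have hvn : g (g (e + 1)) < n := h2.hfn _ (by omega)
      have hrun : f (d + 1) + (g (g (e + 1)) - (d + 1)) ≤ f (g (g (e + 1))) :=
        h1.runhigh (le_refl _) hgp2 (by omega)
      rw [h2.hgf] at hrun
      omega
  refine ⟨f (d + 1), hpd, hpe, hb, ?_⟩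
  intro t
  unfold blockF
  split_ifs with c1 c2 c3
  · -- t < p : fixed
    have hfe : f t ≤ e := by
      by_contra hc
      have hvn : f t < n := h1.hfn t (by omega)
      have hrun : g (e + 1) + (f t - (e + 1)) ≤ g (f t) :=
        h2.runhigh (le_refl _) (by omega) (by omega)
      rw [h1.hgf] at hrun
      omega
    exact h1.fix_low h2 (by omega) hfe
  · -- p ≤ t ≤ d : up block
    have h3 := hup (t - g (e + 1)) (by omega)
    have ht' : g (e + 1) + (t - g (e + 1)) = t := by omega
    rw [ht'] at h3
    omega
  · -- d + 1 ≤ t ≤ d + 1 + e - p : down block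
    have h3 := hdown (t - (d + 1)) (by omega)
    have ht' : d + 1 + (t - (d + 1)) = t := by omega
    rw [ht'] at h3
    omega
  · -- t > d + 1 + e - p : fixed
    by_cases htn : t < n
    · by_cases hfe : e + 1 ≤ f t
      · exact h1.fix_high h2 (by omega) htn hfe
      · exfalso
        by_cases hfp : f (d + 1) ≤ f t
        · have h3 := hdown (f t - f (d + 1)) (by omega)
          have h4 : f (d + 1) + (f t - f (d + 1)) = f t := by omega
          rw [h4] at h3
          have := congrArg g h3
          rw [h1.hgf, h1.hgf] at this
          omega
        · have hfix : f (f t) = f t := by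
            have hfe2 : f (f t) ≤ e := by
              by_contra hc
              have hvn : f (f t) < n := h1.hfn (f t) (by omega)
              have hrun : g (e + 1) + (f (f t) - (e + 1)) ≤ g (f (f t)) :=
                h2.runhigh (le_refl _) (by omega) (by omega)
              rw [h1.hgf] at hrun
              omega
            exact h1.fix_low h2 (by omega) hfe2
          have := congrArg g hfix
          rw [h1.hgf, h1.hgf] at this
          omega
    · exact h1.hfid t (by omega)




def bperm (n d e p : ℕ) (hpd : p ≤ d) (hpe : p ≤ e) (hb : d + e + 2 ≤ n + p) :
    Equiv.Perm (Fin n) where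
  toFun x := ⟨blockF d e p x, blockF_lt hpd hpe hb x.isLt⟩
  invFun x := ⟨blockF e d p x, blockF_lt hpe hpd (by omega) x.isLt⟩
  left_inv x := Fin.ext (blockF_inv hpd hpe x)
  right_inv x := Fin.ext (blockF_inv hpe hpd x)

lemma bperm_inv (n d e p : ℕ) (hpd : p ≤ d) (hpe : p ≤ e) (hb : d + e + 2 ≤ n + p) :
    (bperm n d e p hpd hpe hb)⁻¹ = bperm n e d p hpe hpd (by omega) := rfl

lemma fv_bperm (n d e p : ℕ) (hpd : p ≤ d) (hpe : p ≤ e) (hb : d + e + 2 ≤ n + p) (t : ℕ) :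
    fv (bperm n d e p hpd hpe hb) t = blockF d e p t := by
  by_cases h : t < n
  · rw [fv, dif_pos h]; rfl
  · rw [fv, dif_neg h]
    unfold blockF
    split_ifs <;> omega

lemma blockF_adj {n d e p : ℕ} (hpd : p ≤ d) (hpe : p ≤ e) (hb : d + e + 2 ≤ n + p)
    (hd : d ≤ n - 2) (hn : 2 ≤ n) (k : ℕ) (h1 : 1 ≤ k) (h2 : k ≤ n - 1) :
    (blockF d e p k < blockF d e p (k - 1) ↔ k = d + 1) := by
  unfold blockF
  split_ifs <;> omega

lemma isRightDescent_bperm_iff {n d e p : ℕ} (hpd : p ≤ d) (hpe : p ≤ e)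
    (hb : d + e + 2 ≤ n + p) (hd : d ≤ n - 2) (hn : 2 ≤ n) (k : ℕ) :
    IsRightDescent (bperm n d e p hpd hpe hb) k ↔ k = d + 1 := by
  constructor
  · rintro hk
    obtain ⟨hk1, hk2, -⟩ := id hk
    have := (isRightDescent_iff_s1 _ k hk1 hk2 hn).1 hk
    rw [fv_bperm, fv_bperm] at this
    exact (blockF_adj hpd hpe hb hd hn k hk1 hk2).1 this
  · rintro rfl
    have hk1 : 1 ≤ d + 1 := by omega
    have hk2 : d + 1 ≤ n - 1 := by omega
    rw [isRightDescent_iff_s1 _ _ hk1 hk2 hn, fv_bperm, fv_bperm]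
    exact (blockF_adj hpd hpe hb hd hn (d + 1) hk1 hk2).2 rfl

lemma bperm_spec {n d e p : ℕ} (hpd : p ≤ d) (hpe : p ≤ e) (hb : d + e + 2 ≤ n + p)
    (hd : d ≤ n - 2) (he : e ≤ n - 2) (hn : 2 ≤ n) :
    Bigrassmannian (bperm n d e p hpd hpe hb) ∧
      IsLeftDescent (bperm n d e p hpd hpe hb) (e + 1) ∧
      IsRightDescent (bperm n d e p hpd hpe hb) (d + 1) := by
  have hright := fun k => isRightDescent_bperm_iff hpd hpe hb hd hn k
  have hb' : e + d + 2 ≤ n + p := by omega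
  have hleft : ∀ k, IsLeftDescent (bperm n d e p hpd hpe hb) k ↔ k = e + 1 := by
    intro k
    rw [isLeftDescent_iff_inv, bperm_inv]
    exact isRightDescent_bperm_iff hpe hpd _ he hn k
  refine ⟨⟨⟨e + 1, (hleft _).2 rfl, fun k hk => (hleft k).1 hk⟩,
      ⟨d + 1, (hright _).2 rfl, fun k hk => (hright k).1 hk⟩⟩,
    (hleft _).2 rfl, (hright _).2 rfl⟩

lemma eq_bperm {n d e p : ℕ} (hpd : p ≤ d) (hpe : p ≤ e) (hb : d + e + 2 ≤ n + p)
    (w : Equiv.Perm (Fin n)) (h : ∀ t, fv w t = blockF d e p t) :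
    w = bperm n d e p hpd hpe hb := by
  apply Equiv.ext
  intro x
  apply Fin.ext
  have := h x.val
  rw [fv, dif_pos x.isLt] at this
  simpa [bperm] using this

lemma w_structure {n : ℕ} (hn : 2 ≤ n) {d e : ℕ} (hd : d ≤ n - 2) (he : e ≤ n - 2)
    (w : Equiv.Perm (Fin n))
    (hw : Bigrassmannian w ∧ IsLeftDescent w (e + 1) ∧ IsRightDescent w (d + 1)) :
    ∃ p, ∃ (hpd : p ≤ d) (hpe : p ≤ e) (hb : d + e + 2 ≤ n + p),
      w = bperm n d e p hpd hpe hb := by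
  obtain ⟨⟨hL, hR⟩, hld, hrd⟩ := hw
  -- the unique right descent is d + 1, unique left descent is e + 1
  obtain ⟨j₀, hj₀, hj₀u⟩ := hR
  have hj : j₀ = d + 1 := (hj₀u _ hrd).symm
  obtain ⟨i₀, hi₀, hi₀u⟩ := hL
  have hi : i₀ = e + 1 := (hi₀u _ hld).symm
  subst hj; subst hi
  have hmonoR : ∀ k, k + 1 ≤ n - 1 → k ≠ d → fv w k < fv w (k + 1) := by
    intro k hk hkd
    have hnd : ¬ IsRightDescent w (k + 1) := by
      intro hc
      exact hkd (by have := hj₀u _ hc; omega)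
    rw [isRightDescent_iff_s1 w (k + 1) (by omega) hk hn] at hnd
    simp only [Nat.add_sub_cancel] at hnd
    have hne : fv w k ≠ fv w (k + 1) := by
      intro hc
      have := congrArg (fv w⁻¹) hc
      rw [fv_inv_fv, fv_inv_fv] at this
      omega
    omega
  have hdescR : fv w (d + 1) < fv w d := by
    have := (isRightDescent_iff_s1 w (d + 1) (by omega) (by omega) hn).1 hrd
    simpa using this
  have hmonoL : ∀ k, k + 1 ≤ n - 1 → k ≠ e → fv w⁻¹ k < fv w⁻¹ (k + 1) := by
    intro k hk hke
    have hnd : ¬ IsRightDescent w⁻¹ (k + 1) := by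
      intro hc
      rw [← isLeftDescent_iff_inv] at hc
      exact hke (by have := hi₀u _ hc; omega)
    rw [isRightDescent_iff_s1 w⁻¹ (k + 1) (by omega) hk hn] at hnd
    simp only [Nat.add_sub_cancel] at hnd
    have hne : fv w⁻¹ k ≠ fv w⁻¹ (k + 1) := by
      intro hc
      have := congrArg (fv w⁻¹⁻¹) hc
      rw [fv_inv_fv, fv_inv_fv] at this
      omega
    omega
  have hdescL : fv w⁻¹ (e + 1) < fv w⁻¹ e := by
    rw [isLeftDescent_iff_inv] at hld
    have := (isRightDescent_iff_s1 w⁻¹ (e + 1) (by omega) (by omega) hn).1 hld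
    simpa using this
  have g1 : GD n d e (fv w) (fv w⁻¹) :=
    ⟨hn, hd, he, fv_lt w, fv_inv_fv w, fv_id w, hmonoR, hdescR⟩
  have g2 : GD n e d (fv w⁻¹) (fv w) := by
    refine ⟨hn, he, hd, fv_lt w⁻¹, ?_, fv_id w⁻¹, hmonoL, hdescL⟩
    intro t
    have := fv_inv_fv w⁻¹ t
    rwa [inv_inv] at this
  obtain ⟨p, hpd, hpe, hb, hblock⟩ := g1.structure g2
  exact ⟨p, hpd, hpe, hb, eq_bperm hpd hpe hb w hblock⟩


theorem stmt1 (n : ℕ) (hn : 2 ≤ n) (i j : ℕ)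
    (hi1 : 1 ≤ i) (hi2 : i ≤ n - 1) (hj1 : 1 ≤ j) (hj2 : j ≤ n - 1) :
    Nat.card {w : Equiv.Perm (Fin n) //
        Bigrassmannian w ∧ IsLeftDescent w i ∧ IsRightDescent w j} =
      min (min i j) (min (n - i) (n - j)) := by
  obtain ⟨e, rfl⟩ : ∃ e, i = e + 1 := ⟨i - 1, by omega⟩
  obtain ⟨d, rfl⟩ : ∃ d, j = d + 1 := ⟨j - 1, by omega⟩
  have hd : d ≤ n - 2 := by omega
  have he : e ≤ n - 2 := by omega
  set lo := (d + e + 2) - n with hlo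
  set m := min d e + 1 - lo with hm
  have hmeq : m = min (min (e + 1) (d + 1)) (min (n - (e + 1)) (n - (d + 1))) := by
    rw [hm, hlo]; omega
  rw [← hmeq]
  have hFb : ∀ t : Fin m, lo + t.val ≤ d ∧ lo + t.val ≤ e ∧ d + e + 2 ≤ n + (lo + t.val) := by
    intro t
    have := t.isLt
    omega
  have key : Nat.card (Fin m) = Nat.card {w : Equiv.Perm (Fin n) //
      Bigrassmannian w ∧ IsLeftDescent w (e + 1) ∧ IsRightDescent w (d + 1)} := by
    apply Nat.card_eq_of_bijective
      (f := fun t : Fin m =>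
        ⟨bperm n d e (lo + t.val) (hFb t).1 (hFb t).2.1 (hFb t).2.2,
          bperm_spec (hFb t).1 (hFb t).2.1 (hFb t).2.2 hd he hn⟩)
    constructor
    · intro t1 t2 h
      have hperm := congrArg Subtype.val h
      have := congrArg (fun w : Equiv.Perm (Fin n) => fv w (d + 1)) hperm
      simp only at this
      rw [fv_bperm, fv_bperm] at this
      unfold blockF at this
      have e1 := (hFb t1).1
      have e2 := (hFb t1).2.1
      have e3 := (hFb t2).1
      have e4 := (hFb t2).2.1
      split_ifs at this <;> exact Fin.ext (by omega)
    · rintro ⟨w, hw⟩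
      obtain ⟨p, hpd, hpe, hb, hwe⟩ := w_structure hn hd he w hw
      have hplo : lo ≤ p := by omega
      refine ⟨⟨p - lo, by omega⟩, ?_⟩
      apply Subtype.ext
      simp only
      rw [hwe]
      symm
      apply eq_bperm
      intro t
      rw [fv_bperm]
      have : lo + (p - lo) = p := by omega
      rw [this]
  rw [← key]
  simp

end Paper
end
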